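/- Let β > 0, let n ≥ 1, let J be a nonempty finite index set, let w_i ∈ [0,1] for i = 1, …, n, and for each j ∈ J let y^{(j)}_i ∈ [0,1] for i = 1, …, n. If ∑_{j∈J} ∑_{i=1}^n σ_β(w_i − y^{(j)}_i) ≥ |J| · n/2, then |J| · (β/4) · ∑_{i=1}^n w_i ≥ ∑_{j∈J} (∑_{i=1}^n y^{(j)}_i) · (1 − exp(−β)) / (2·(1 + exp(−β))). -/

import Mathlib

noncomputable def sigma (β t : ℝ) : ℝ := 1 / (1 + Real.exp (-(β * t)))

lemma sigma_hasDerivAt (β t : ℝ) :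
    HasDerivAt (sigma β) (β * Real.exp (-(β * t)) / (1 + Real.exp (-(β * t)))^2) t := by
  have h1 : HasDerivAt (fun t : ℝ => -(β * t)) (-β) t := by
    simpa using ((hasDerivAt_id t).const_mul β).fun_neg
  have h2 : HasDerivAt (fun t : ℝ => Real.exp (-(β * t)))
      (Real.exp (-(β * t)) * (-β)) t := (Real.hasDerivAt_exp _).comp t h1
  have h3 : HasDerivAt (fun t : ℝ => 1 + Real.exp (-(β * t)))
      (Real.exp (-(β * t)) * (-β)) t := by
    exact h2.const_add 1
  have hne : (1 : ℝ) + Real.exp (-(β * t)) ≠ 0 := by positivity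
  have h4 := h3.inv hne
  have : sigma β = fun t : ℝ => (1 + Real.exp (-(β * t)))⁻¹ := by
    funext x; simp [sigma, one_div]
  rw [this]
  refine h4.congr_deriv ?_
  ring

lemma sigma_deriv (β t : ℝ) :
    deriv (sigma β) t = β * Real.exp (-(β * t)) / (1 + Real.exp (-(β * t)))^2 :=
  (sigma_hasDerivAt β t).deriv

lemma sigma_lipschitz (β : ℝ) (hβ : 0 < β) (a b : ℝ) :
    |sigma β b - sigma β a| ≤ β / 4 * |b - a| := by
  have hdiff : ∀ x ∈ (Set.univ : Set ℝ), DifferentiableAt ℝ (sigma β) x :=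
    fun x _ => (sigma_hasDerivAt β x).differentiableAt
  have hbound : ∀ x ∈ (Set.univ : Set ℝ), ‖deriv (sigma β) x‖ ≤ β / 4 := by
    intro x _
    rw [sigma_deriv, Real.norm_eq_abs]
    set u := Real.exp (-(β * x)) with hu
    have hu0 : 0 < u := Real.exp_pos _
    rw [abs_of_nonneg (by positivity)]
    rw [div_le_iff₀ (by positivity)]
    nlinarith [sq_nonneg (1 - u), sq_nonneg u]
  have := convex_univ.norm_image_sub_le_of_norm_deriv_le hdiff hbound
    (Set.mem_univ a) (Set.mem_univ b)
  simpa [Real.norm_eq_abs] using this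

lemma sigma_concave (β : ℝ) (hβ : 0 < β) :
    ConcaveOn ℝ (Set.Icc (0:ℝ) 1) (sigma β) := by
  apply AntitoneOn.concaveOn_of_deriv (convex_Icc 0 1)
  · exact fun x _ => ((sigma_hasDerivAt β x).differentiableAt).continuousAt.continuousWithinAt
  · exact fun x _ => ((sigma_hasDerivAt β x).differentiableAt).differentiableWithinAt
  · rw [interior_Icc]
    intro x hx x' hx' hxx'
    rw [sigma_deriv, sigma_deriv]
    set u := Real.exp (-(β * x)) with hu
    set v := Real.exp (-(β * x')) with hv
    have hv0 : 0 < v := Real.exp_pos _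
    have hvu : v ≤ u := by
      apply Real.exp_le_exp.2
      nlinarith [hx.1, hx'.1]
    have hu1 : u ≤ 1 := by
      rw [hu, Real.exp_le_one_iff]
      nlinarith [hx.1]
    rw [div_le_div_iff₀ (by positivity) (by positivity)]
    have h1 : 0 < 1 + u := by linarith
    have h2 : 0 < 1 + v := by linarith
    nlinarith [mul_pos hv0 (mul_pos h1 h2), sq_nonneg (u - v),
      mul_nonneg (mul_nonneg hβ.le (sub_nonneg.2 hvu)) (sub_nonneg.2 (mul_le_one₀ hu1 hv0.le (hvu.trans hu1)))]

lemma sigma_neg (β t : ℝ) : sigma β (-t) = 1 - sigma β t := by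
  unfold sigma
  have hr : -(β * -t) = β * t := by ring
  rw [hr]
  have h1 : Real.exp (-(β * t)) * Real.exp (β * t) = 1 := by
    rw [← Real.exp_add]; ring_nf; exact Real.exp_zero
  have e1 : (0:ℝ) < 1 + Real.exp (-(β * t)) := by positivity
  have e2 : (0:ℝ) < 1 + Real.exp (β * t) := by positivity
  field_simp
  nlinarith [h1]

lemma sigma_pointwise (β : ℝ) (hβ : 0 < β) {a b : ℝ}
    (ha : a ∈ Set.Icc (0:ℝ) 1) (hb : b ∈ Set.Icc (0:ℝ) 1) :
    sigma β (a - b) ≤ 1/2 + β/4 * a -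
      b * ((1 - Real.exp (-β)) / (2 * (1 + Real.exp (-β)))) := by
  have step1 : sigma β (a - b) - sigma β (-b) ≤ β / 4 * a := by
    have := sigma_lipschitz β hβ (-b) (a - b)
    have habs : |a - b - -b| = a := by
      rw [abs_of_nonneg] <;> simp [ha.1]
    rw [habs] at this
    calc sigma β (a - b) - sigma β (-b) ≤ |sigma β (a - b) - sigma β (-b)| := le_abs_self _
      _ ≤ β / 4 * a := this
  have step2 : sigma β (-b) = 1 - sigma β b := sigma_neg β b
  -- concavity: sigma β b ≥ (1-b) * sigma β 0 + b * sigma β 1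
  have hconc := (sigma_concave β hβ).2 (Set.left_mem_Icc.2 zero_le_one)
    (Set.right_mem_Icc.2 zero_le_one) (by linarith [hb.2] : (0:ℝ) ≤ 1 - b) hb.1
    (by ring : (1 - b) + b = 1)
  simp only [smul_eq_mul, mul_zero, mul_one, zero_add] at hconc
  have h0 : sigma β 0 = 1/2 := by
    unfold sigma; simp
    norm_num
  have h1 : sigma β 1 = 1 / (1 + Real.exp (-β)) := by
    unfold sigma; rw [mul_one]
  have hE : (0:ℝ) < 1 + Real.exp (-β) := by positivity
  have hE1 : Real.exp (-β) < 1 := by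
    rw [Real.exp_lt_one_iff]; linarith
  have step3 : sigma β b ≥ (1 - b) * (1/2) + b * (1 / (1 + Real.exp (-β))) := by
    rw [← h0, ← h1]; exact hconc
  have key : 1 / (1 + Real.exp (-β)) - 1/2 =
      (1 - Real.exp (-β)) / (2 * (1 + Real.exp (-β))) := by
    field_simp
    ring
  have : sigma β (-b) ≤ 1/2 - b * ((1 - Real.exp (-β)) / (2 * (1 + Real.exp (-β)))) := by
    rw [step2, ← key]
    nlinarith [step3]
  linarith [step1, this]

theorem borda_above_average_core {ι : Type*} (β : ℝ) (hβ : 0 < β)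
    (n : ℕ) (hn : 1 ≤ n) (J : Finset ι) (hJ : J.Nonempty)
    (w : Fin n → ℝ) (y : ι → Fin n → ℝ)
    (hw : ∀ i, w i ∈ Set.Icc (0:ℝ) 1)
    (hy : ∀ j ∈ J, ∀ i, y j i ∈ Set.Icc (0:ℝ) 1)
    (h : ∑ j ∈ J, ∑ i, sigma β (w i - y j i) ≥ (J.card : ℝ) * n / 2) :
    (J.card : ℝ) * (β / 4) * ∑ i, w i ≥
      ∑ j ∈ J, (∑ i, y j i) * ((1 - Real.exp (-β)) / (2 * (1 + Real.exp (-β)))) := by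
  set c : ℝ := (1 - Real.exp (-β)) / (2 * (1 + Real.exp (-β))) with hc
  have hsum : ∑ j ∈ J, ∑ i, sigma β (w i - y j i) ≤
      ∑ j ∈ J, (((n:ℝ)/2 + β/4 * ∑ i, w i) - (∑ i, y j i) * c) := by
    apply Finset.sum_le_sum
    intro j hj
    have : ∑ i, sigma β (w i - y j i) ≤ ∑ i, (1/2 + β/4 * w i - (y j i) * c) :=
      Finset.sum_le_sum fun i _ => sigma_pointwise β hβ (hw i) (hy j hj i)
    calc ∑ i, sigma β (w i - y j i) ≤ ∑ i, (1/2 + β/4 * w i - (y j i) * c) := this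
      _ = ((n:ℝ)/2 + β/4 * ∑ i, w i) - (∑ i, y j i) * c := by
          rw [Finset.sum_sub_distrib, Finset.sum_add_distrib, ← Finset.mul_sum,
            ← Finset.sum_mul, Finset.sum_const]
          simp
          ring
  rw [Finset.sum_sub_distrib, Finset.sum_const, nsmul_eq_mul] at hsum
  have : ∑ j ∈ J, (∑ i, y j i) * c ≤ (J.card : ℝ) * (β/4 * ∑ i, w i) := by
    have hcard : (J.card : ℝ) * ((n:ℝ)/2 + β/4 * ∑ i, w i) =
        (J.card : ℝ) * n / 2 + (J.card : ℝ) * (β/4 * ∑ i, w i) := by ring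
    rw [hcard] at hsum
    linarith [h]
  calc (J.card : ℝ) * (β / 4) * ∑ i, w i = (J.card : ℝ) * (β/4 * ∑ i, w i) := by ring
    _ ≥ ∑ j ∈ J, (∑ i, y j i) * c := this
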